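/- Let γ ∈ (0,1), set ε = (1−γ)/2, let D > 0, and let t_k ≥ 1 be a natural number. Define Y : ℕ → ℝ on t ≥ t_k by Y(t_k) = D and Y(t+1) = (1 − 1/t)·Y(t) + (1/t)·γ·D for every t ≥ t_k. Then for every natural t > 3·t_k, Y(t) < (γ + 2ε/3)·D. -/

import Mathlib

/-- The deterministic error part drops below `(γ + 2ε/3)·D` (with `ε = (1-γ)/2`)
after at most a tripling of the time: for all `t > 3·t_k`, `Y t < (γ + 2ε/3)·D`. -/
theorem stmt_3 (γ : ℝ) (hγ0 : 0 < γ) (hγ1 : γ < 1)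
    (ε : ℝ) (hε : ε = (1 - γ) / 2)
    (D : ℝ) (hD : 0 < D)
    (tk : ℕ) (htk : 1 ≤ tk)
    (Y : ℕ → ℝ) (hY0 : Y tk = D)
    (hYrec : ∀ t, tk ≤ t → Y (t + 1) = (1 - 1 / (t : ℝ)) * Y t + (1 / (t : ℝ)) * γ * D) :
    ∀ t, 3 * tk < t → Y t < (γ + 2 * ε / 3) * D := by
  have htk' : (1:ℝ) ≤ (tk:ℝ) := by exact_mod_cast htk
  -- closed form for t ≥ tk + 1
  have key : ∀ t, tk + 1 ≤ t →
      Y t = γ * D + (1 - γ) * D * ((tk:ℝ) - 1) / ((t:ℝ) - 1) := by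
    intro t ht
    induction t with
    | zero => omega
    | succ n ih =>
      rcases eq_or_lt_of_le ht with heq | hlt
      · -- n + 1 = tk + 1, i.e. n = tk
        have hn : n = tk := by omega
        subst hn
        rw [hYrec n le_rfl, hY0]
        have hn0 : (n:ℝ) ≠ 0 := by positivity
        push_cast
        field_simp
        ring_nf
        field_simp
        ring
      · have hn : tk + 1 ≤ n := by omega
        have hrec := hYrec n (by omega)
        rw [hrec, ih hn]
        have hn1 : (2:ℝ) ≤ (n:ℝ) := by exact_mod_cast (by omega : 2 ≤ n)
        have hn0 : (n:ℝ) ≠ 0 := by linarith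
        have hn1' : (n:ℝ) - 1 ≠ 0 := by linarith
        push_cast
        field_simp
        ring_nf
        field_simp
        ring
  intro t ht
  have ht' : tk + 1 ≤ t := by omega
  rw [key t ht', hε]
  have htpos : (0:ℝ) < (t:ℝ) - 1 := by
    have : (1:ℝ) < (t:ℝ) := by exact_mod_cast (by omega : 1 < t)
    linarith
  have hcast : (3:ℝ) * (tk:ℝ) < (t:ℝ) := by exact_mod_cast ht
  have hfrac : ((tk:ℝ) - 1) / ((t:ℝ) - 1) < 1 / 3 := by
    rw [div_lt_div_iff₀ htpos (by norm_num : (0:ℝ) < 3)]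
    linarith
  have hpos : 0 < (1 - γ) * D := by
    have : 0 < 1 - γ := by linarith
    positivity
  have : (1 - γ) * D * (((tk:ℝ) - 1) / ((t:ℝ) - 1)) < (1 - γ) * D * (1/3) :=
    (mul_lt_mul_iff_right₀ hpos).mpr hfrac
  rw [mul_div_assoc]
  nlinarith [this]
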